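/- arXiv:1906.02488 — 2 statements merged into one kernel-verified Lean document; each statement's English description precedes it below -/
import Mathlib

section
/- Energy identity for the nonlinear delayed KdV–Burgers equation (identity (3.9) of Theorem 3.3, classical-solution form). Let τ > 0, λ₀, λ ∈ L^∞(ℝ), and let u be a classical solution with Schwartz decay of the delayed nonlinear equation ∂_t u + ∂_x³u − ∂_x²u + λ₀ u + λ u(·, t−τ) + u·∂_x u = 0. Then for all t ≥ 0: (1/2)∫_ℝ u(x,t)² dx + ∫₀^t ∫_ℝ (∂_x u(x,s))² dx ds + ∫₀^t ∫_ℝ λ₀(x)·u(x,s)² dx ds + ∫₀^t ∫_ℝ λ(x)·u(x, s−τ)·u(x,s) dx ds = (1/2)∫_ℝ u(x,0)² dx. -/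
open MeasureTheory SchwartzMap

/-- The spatial derivative of a Schwartz function. -/
noncomputable def pd (v : 𝓢(ℝ, ℝ)) : 𝓢(ℝ, ℝ) := SchwartzMap.derivCLM ℝ ℝ v

open Filter Set

namespace EnergyAux

noncomputable def sem (v : 𝓢(ℝ, ℝ)) : ℝ :=
  SchwartzMap.seminorm ℝ 0 0 v + SchwartzMap.seminorm ℝ 2 0 v

lemma continuous_sem : Continuous sem := by
  have h1 := (schwartz_withSeminorms ℝ ℝ ℝ).continuous_seminorm (0, 0)
  have h2 := (schwartz_withSeminorms ℝ ℝ ℝ).continuous_seminorm (2, 0)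
  exact (by simpa [schwartzSeminormFamily] using h1.add h2 :
    Continuous (⇑(SchwartzMap.seminorm ℝ 0 0) + ⇑(SchwartzMap.seminorm ℝ 2 0)))

lemma sem_nonneg (v : 𝓢(ℝ, ℝ)) : 0 ≤ sem v :=
  add_nonneg (apply_nonneg _ _) (apply_nonneg _ _)

lemma abs_le_sem (v : 𝓢(ℝ, ℝ)) (x : ℝ) : (1 + x ^ 2) * |v x| ≤ sem v := by
  have h1 : ‖v x‖ ≤ SchwartzMap.seminorm ℝ 0 0 v := norm_le_seminorm ℝ v x
  have h2 : ‖x‖ ^ 2 * ‖v x‖ ≤ SchwartzMap.seminorm ℝ 2 0 v :=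
    norm_pow_mul_le_seminorm ℝ v 2 x
  have : (1 + x ^ 2) * |v x| = ‖v x‖ + ‖x‖ ^ 2 * ‖v x‖ := by
    rw [Real.norm_eq_abs, Real.norm_eq_abs, sq_abs]; ring
  rw [this, sem]; exact add_le_add h1 h2

lemma abs_le_sem_div (v : 𝓢(ℝ, ℝ)) (x : ℝ) : |v x| ≤ sem v * (1 + x ^ 2)⁻¹ := by
  have hpos : (0:ℝ) < 1 + x ^ 2 := by positivity
  rw [← div_eq_mul_inv, le_div_iff₀ hpos, mul_comm]
  exact abs_le_sem v x

lemma abs_le_sem' (v : 𝓢(ℝ, ℝ)) (x : ℝ) : |v x| ≤ sem v := by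
  nlinarith [abs_le_sem v x, abs_nonneg (v x), sq_nonneg x]

lemma hasDerivAt_pd (v : 𝓢(ℝ, ℝ)) (x : ℝ) : HasDerivAt v (pd v x) x := by
  simpa [pd, SchwartzMap.derivCLM_apply] using v.differentiableAt.hasDerivAt

lemma integrable_mul (v w : 𝓢(ℝ, ℝ)) :
    Integrable (fun x => v x * w x) (volume : Measure ℝ) :=
  (w.integrable (μ := volume)).bdd_mul v.continuous.aestronglyMeasurable
    (Filter.Eventually.of_forall fun x => by simpa [Real.norm_eq_abs] using abs_le_sem' v x)

lemma integrable_mul3 (v w z : 𝓢(ℝ, ℝ)) :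
    Integrable (fun x => v x * (w x * z x)) (volume : Measure ℝ) :=
  (integrable_mul w z).bdd_mul v.continuous.aestronglyMeasurable
    (Filter.Eventually.of_forall fun x => by simpa [Real.norm_eq_abs] using abs_le_sem' v x)

/-- integration by parts core: `∫ v * w''' = 0` etc. all follow from this. -/
lemma integral_deriv_eq_zero {G g : ℝ → ℝ} (hG : ∀ x, HasDerivAt G (g x) x)
    (hg : Integrable g (volume : Measure ℝ)) (hGi : Integrable G (volume : Measure ℝ)) :
    ∫ x, g x = 0 :=
  integral_eq_zero_of_hasDerivAt_of_integrable hG hg hGi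

lemma ibp1 (v : 𝓢(ℝ, ℝ)) : ∫ x, v x * pd (pd (pd v)) x = 0 := by
  have hG : ∀ x : ℝ, HasDerivAt (fun y => v y * pd (pd v) y - (pd v y) ^ 2 / 2)
      (v x * pd (pd (pd v)) x) x := by
    intro x
    have := ((hasDerivAt_pd v x).mul (hasDerivAt_pd (pd (pd v)) x)).sub
      (((hasDerivAt_pd (pd v) x).pow 2).div_const 2)
    refine this.congr_deriv ?_
    push_cast
    ring
  have hg : Integrable (fun x => v x * pd (pd (pd v)) x) volume := integrable_mul _ _
  have hGi : Integrable (fun y => v y * pd (pd v) y - (pd v y) ^ 2 / 2) volume := by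
    apply (integrable_mul v (pd (pd v))).sub
    simpa [pow_two, div_eq_mul_inv] using ((integrable_mul (pd v) (pd v)).div_const 2)
  exact integral_deriv_eq_zero hG hg hGi

lemma ibp2 (v : 𝓢(ℝ, ℝ)) :
    ∫ x, v x * pd (pd v) x = - ∫ x, (pd v x) ^ 2 := by
  have hG : ∀ x : ℝ, HasDerivAt (fun y => v y * pd v y)
      ((pd v x) ^ 2 + v x * pd (pd v) x) x := by
    intro x
    have := (hasDerivAt_pd v x).mul (hasDerivAt_pd (pd v) x)
    refine this.congr_deriv ?_
    ring
  have h0 : ∫ x, ((pd v x) ^ 2 + v x * pd (pd v) x) = 0 :=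
    integral_deriv_eq_zero hG
      (by simp only [pow_two]; exact ((integrable_mul (pd v) (pd v)).add (integrable_mul v (pd (pd v))) :
        Integrable (fun x => pd v x * pd v x + v x * pd (pd v) x) volume))
      (integrable_mul v (pd v))
  have hsplit : ∫ x, ((pd v x) ^ 2 + v x * pd (pd v) x)
      = (∫ x, (pd v x) ^ 2) + ∫ x, v x * pd (pd v) x := by
    apply integral_add
    · simpa [pow_two] using integrable_mul (pd v) (pd v)
    · exact integrable_mul v (pd (pd v))
  rw [hsplit] at h0
  linarith

lemma ibp3 (v : 𝓢(ℝ, ℝ)) : ∫ x, v x * (v x * pd v x) = 0 := by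
  have hG : ∀ x : ℝ, HasDerivAt (fun y => (v y) ^ 3 / 3) (v x * (v x * pd v x)) x := by
    intro x
    have := ((hasDerivAt_pd v x).pow 3).div_const 3
    refine this.congr_deriv ?_
    push_cast
    ring
  refine integral_deriv_eq_zero hG (integrable_mul3 v v (pd v)) ?_
  have : Integrable (fun y => v y * (v y * v y)) volume := integrable_mul3 v v v
  simpa [pow_succ, pow_zero, div_eq_mul_inv, mul_assoc] using this.div_const 3

lemma spatial_integral (v w : 𝓢(ℝ, ℝ)) (l0' l' : ℝ → ℝ) (c0 c1 : ℝ)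
    (hm0 : AEStronglyMeasurable l0' (volume : Measure ℝ))
    (hm1 : AEStronglyMeasurable l' (volume : Measure ℝ))
    (hb0 : ∀ᵐ x : ℝ ∂(volume : Measure ℝ), ‖l0' x‖ ≤ c0)
    (hb1 : ∀ᵐ x : ℝ ∂(volume : Measure ℝ), ‖l' x‖ ≤ c1) :
    ∫ x, v x * (pd (pd (pd v)) x - pd (pd v) x + l0' x * v x + l' x * w x + v x * pd v x)
      = (∫ x, (pd v x) ^ 2) + (∫ x, l0' x * (v x) ^ 2) + (∫ x, l' x * w x * v x) := by
  have i1 : Integrable (fun x => v x * pd (pd (pd v)) x) volume := integrable_mul _ _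
  have i2 : Integrable (fun x => -(v x * pd (pd v) x)) volume := (integrable_mul _ _).neg
  have i3 : Integrable (fun x => l0' x * (v x * v x)) volume :=
    (integrable_mul v v).bdd_mul hm0 hb0
  have i4 : Integrable (fun x => l' x * (w x * v x)) volume :=
    (integrable_mul w v).bdd_mul hm1 hb1
  have i5 : Integrable (fun x => v x * (v x * pd v x)) volume := integrable_mul3 _ _ _
  have e : (fun x => v x * (pd (pd (pd v)) x - pd (pd v) x + l0' x * v x + l' x * w x
        + v x * pd v x))
      = fun x => (v x * pd (pd (pd v)) x) + (-(v x * pd (pd v) x)) + (l0' x * (v x * v x))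
        + (l' x * (w x * v x)) + v x * (v x * pd v x) := by
    funext x; ring
  have j1 : Integrable (fun x => v x * pd (pd (pd v)) x + -(v x * pd (pd v) x)) volume := i1.add i2
  have j2 : Integrable (fun x => v x * pd (pd (pd v)) x + -(v x * pd (pd v) x)
      + l0' x * (v x * v x)) volume := j1.add i3
  have j3 : Integrable (fun x => v x * pd (pd (pd v)) x + -(v x * pd (pd v) x)
      + l0' x * (v x * v x) + l' x * (w x * v x)) volume := j2.add i4
  rw [e, integral_add j3 i5, integral_add j2 i4, integral_add j1 i3, integral_add i1 i2,
    ibp1, ibp3, integral_neg, ibp2]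
  have e2 : ∫ x, l0' x * ((v x) ^ 2) = ∫ x, l0' x * (v x * v x) := by
    congr 1; funext x; ring
  have e3 : (∫ x, l' x * w x * v x) = ∫ x, l' x * (w x * v x) := by
    congr 1; funext x; ring
  rw [e2, e3]; ring

lemma joint_cont {c : ℝ → 𝓢(ℝ, ℝ)} (hc : Continuous c) :
    Continuous fun p : ℝ × ℝ => c p.1 p.2 := by
  have h : Continuous fun p : ℝ × ℝ =>
      (SchwartzMap.toBoundedContinuousFunctionCLM ℝ ℝ ℝ (c p.1)) p.2 :=
    continuous_eval.comp
      ((((SchwartzMap.toBoundedContinuousFunctionCLM ℝ ℝ ℝ).continuous.comp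
        (hc.comp continuous_fst))).prodMk continuous_snd)
  simpa only [SchwartzMap.toBoundedContinuousFunctionCLM_apply] using h

lemma curve_eval_cont {c : ℝ → 𝓢(ℝ, ℝ)} (hc : Continuous c) (x : ℝ) :
    Continuous fun s => c s x :=
  (joint_cont hc).comp (continuous_id.prodMk continuous_const)

lemma abs_add5 (a b c d e : ℝ) : |a - b + c + d + e| ≤ |a| + |b| + |c| + |d| + |e| := by
  calc |a - b + c + d + e| ≤ |a - b + c + d| + |e| := abs_add_le _ _
    _ ≤ (|a - b + c| + |d|) + |e| := by gcongr; exact abs_add_le _ _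
    _ ≤ ((|a - b| + |c|) + |d|) + |e| := by gcongr; exact abs_add_le _ _
    _ ≤ (((|a| + |b|) + |c|) + |d|) + |e| := by gcongr; simpa [sub_eq_add_neg, abs_neg] using abs_add_le a (-b)

lemma ftc_pointwise {t₀ : ℝ} (ht₀ : 0 < t₀) (f g gc : ℝ → ℝ)
    (hf : Continuous f) (hderiv : ∀ s ∈ Set.Ioo (0:ℝ) t₀, HasDerivAt f (g s) s)
    (hgc : Continuous gc)
    (hae : g =ᵐ[(volume : Measure ℝ).restrict (Set.Ioc 0 t₀)] gc) :
    f t₀ - f 0 = ∫ s in Set.Ioc (0:ℝ) t₀, gc s := by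
  have hgci : IntegrableOn gc (Set.Ioc 0 t₀) (volume : Measure ℝ) :=
    hgc.integrableOn_Ioc
  have hint : IntervalIntegrable g volume 0 t₀ := by
    rw [intervalIntegrable_iff_integrableOn_Ioc_of_le ht₀.le]
    exact hgci.congr hae.symm
  have h := intervalIntegral.integral_eq_sub_of_hasDeriv_right_of_le ht₀.le hf.continuousOn
    (fun s hs => (hderiv s hs).hasDerivWithinAt) hint
  rw [intervalIntegral.integral_of_le ht₀.le] at h
  rw [← h]
  exact integral_congr_ae hae

end EnergyAux

open EnergyAux in
set_option maxHeartbeats 2000000 in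
/-- Identity (3.9) of Theorem 3.3: energy identity for the nonlinear delayed
KdV–Burgers equation. -/
theorem energy_identity_nonlinear_delayed
    (τ : ℝ) (hτ : 0 < τ)
    (l0 l : ℝ → ℝ)
    (hl0 : MemLp l0 ⊤ (volume : Measure ℝ)) (hl : MemLp l ⊤ (volume : Measure ℝ))
    (u ut : ℝ → 𝓢(ℝ, ℝ))
    (hu_cont : ContinuousOn u (Set.Ici (-τ)))
    (hu_deriv : ∀ t > (0 : ℝ), ∀ x : ℝ, HasDerivAt (fun s => u s x) (ut t x) t)
    (heq : ∀ t > (0 : ℝ), ∀ᵐ x : ℝ ∂(volume : Measure ℝ),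
      ut t x + pd (pd (pd (u t))) x - pd (pd (u t)) x
        + l0 x * u t x + l x * u (t - τ) x + u t x * pd (u t) x = 0) :
    ∀ t ≥ (0 : ℝ),
      (1 / 2) * (∫ x : ℝ, (u t x) ^ 2)
        + (∫ s in (0 : ℝ)..t, ∫ x : ℝ, (pd (u s) x) ^ 2)
        + (∫ s in (0 : ℝ)..t, ∫ x : ℝ, l0 x * (u s x) ^ 2)
        + (∫ s in (0 : ℝ)..t, ∫ x : ℝ, l x * u (s - τ) x * u s x)
      = (1 / 2) * ∫ x : ℝ, (u 0 x) ^ 2 := by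
  intro t₀ ht₀
  rcases eq_or_lt_of_le ht₀ with rfl | ht₀pos
  · simp
  -- measurable representatives of l0 and l
  set l0' : ℝ → ℝ := hl0.1.mk l0 with hl0'def
  set l' : ℝ → ℝ := hl.1.mk l with hl'def
  have hl0ae : l0 =ᵐ[volume] l0' := hl0.1.ae_eq_mk
  have hlae : l =ᵐ[volume] l' := hl.1.ae_eq_mk
  have hm0 : StronglyMeasurable l0' := hl0.1.stronglyMeasurable_mk
  have hm1 : StronglyMeasurable l' := hl.1.stronglyMeasurable_mk
  set c0 : ℝ := (eLpNormEssSup l0 volume).toReal with hc0def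
  set c1 : ℝ := (eLpNormEssSup l volume).toReal with hc1def
  have hc0nn : 0 ≤ c0 := ENNReal.toReal_nonneg
  have hc1nn : 0 ≤ c1 := ENNReal.toReal_nonneg
  have hb0 : ∀ᵐ x : ℝ ∂(volume : Measure ℝ), ‖l0' x‖ ≤ c0 := by
    have hlt : eLpNormEssSup l0 (volume : Measure ℝ) ≠ ⊤ := by
      have h2 := hl0.2; rw [eLpNorm_exponent_top] at h2; exact h2.ne
    filter_upwards [ae_le_eLpNormEssSup (f := l0) (μ := (volume : Measure ℝ)), hl0ae]
      with x hx hx'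
    rw [← hx']
    calc ‖l0 x‖ = ((‖l0 x‖₊ : ENNReal)).toReal := by simp
      _ ≤ c0 := ENNReal.toReal_mono hlt hx
  have hb1 : ∀ᵐ x : ℝ ∂(volume : Measure ℝ), ‖l' x‖ ≤ c1 := by
    have hlt : eLpNormEssSup l (volume : Measure ℝ) ≠ ⊤ := by
      have h2 := hl.2; rw [eLpNorm_exponent_top] at h2; exact h2.ne
    filter_upwards [ae_le_eLpNormEssSup (f := l) (μ := (volume : Measure ℝ)), hlae]
      with x hx hx'
    rw [← hx']
    calc ‖l x‖ = ((‖l x‖₊ : ENNReal)).toReal := by simp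
      _ ≤ c1 := ENNReal.toReal_mono hlt hx
  -- the globally continuous modification of u
  set v : ℝ → 𝓢(ℝ, ℝ) := fun s => u (max s (-τ)) with hvdef
  have hv_cont : Continuous v :=
    hu_cont.comp_continuous (continuous_id.max continuous_const) (fun s => Set.mem_Ici.mpr (le_max_right _ _))
  have hveq : ∀ s : ℝ, -τ ≤ s → v s = u s := by
    intro s hs; simp only [hvdef]; rw [max_eq_left hs]
  have hv0 : v t₀ = u t₀ := hveq _ (by linarith)
  have hv00 : v 0 = u 0 := hveq _ (by linarith)
  -- curves
  have hvc1 : Continuous fun s => pd (v s) := (SchwartzMap.derivCLM ℝ ℝ).continuous.comp hv_cont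
  have hvc2 : Continuous fun s => pd (pd (v s)) :=
    (SchwartzMap.derivCLM ℝ ℝ).continuous.comp hvc1
  have hvc3 : Continuous fun s => pd (pd (pd (v s))) :=
    (SchwartzMap.derivCLM ℝ ℝ).continuous.comp hvc2
  have hvcm : Continuous fun s => v (s - τ) := hv_cont.comp (continuous_id.sub continuous_const)
  -- the time-derivative, made jointly measurable
  set T : ℝ × ℝ → ℝ := fun q => if 0 < q.1 then ut q.1 q.2 else 0 with hTdef
  have hTmeas : Measurable T := by
    have hfn : ∀ n : ℕ, Measurable fun q : ℝ × ℝ =>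
        if 0 < q.1 then (v (q.1 + 1 / ((n : ℝ) + 1)) q.2 - v q.1 q.2) * ((n : ℝ) + 1) else 0 := by
      intro n
      refine Measurable.ite (measurableSet_lt measurable_const measurable_fst) ?_
        measurable_const
      exact (((joint_cont (hv_cont.comp (continuous_id.add continuous_const))).sub
        (joint_cont hv_cont)).mul continuous_const).measurable
    refine measurable_of_tendsto_metrizable' atTop hfn (tendsto_pi_nhds.mpr ?_)
    rintro ⟨s, x⟩
    by_cases hs : 0 < s
    · simp only [hTdef, if_pos hs]
      have hd := hu_deriv s hs x
      rw [hasDerivAt_iff_tendsto_slope] at hd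
      have hseq : Tendsto (fun n : ℕ => s + 1 / ((n : ℝ) + 1)) atTop (nhdsWithin s {s}ᶜ) := by
        apply tendsto_nhdsWithin_of_tendsto_nhds_of_eventually_within
        · have h0 : Tendsto (fun n : ℕ => 1 / ((n : ℝ) + 1)) atTop (nhds 0) :=
            tendsto_one_div_add_atTop_nhds_zero_nat
          simpa using tendsto_const_nhds.add h0
        · filter_upwards with n
          have hpos : (0 : ℝ) < 1 / ((n : ℝ) + 1) := by positivity
          simp only [Set.mem_compl_iff, Set.mem_singleton_iff]
          exact (lt_add_of_pos_right s hpos).ne'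
      have hcomp := hd.comp hseq
      refine hcomp.congr ?_
      intro n
      have hpos : (0 : ℝ) < 1 / ((n : ℝ) + 1) := by positivity
      have h1 : v (s + 1 / ((n : ℝ) + 1)) = u (s + 1 / ((n : ℝ) + 1)) :=
        hveq _ (by linarith)
      have h2 : v s = u s := hveq _ (by linarith)
      show (slope (fun σ => u σ x) s ∘ fun m : ℕ => s + 1 / ((m : ℝ) + 1)) n
          = (v (s + 1 / ((n : ℝ) + 1)) x - v s x) * ((n : ℝ) + 1)
      simp only [Function.comp_apply]
      rw [h1, h2, slope_def_field]
      have hne : ((n : ℝ) + 1) ≠ 0 := by positivity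
      field_simp
      ring
    · simp only [hTdef, if_neg hs]
      exact tendsto_const_nhds
  -- restricted time measure
  set ρ : Measure ℝ := (volume : Measure ℝ).restrict (Set.Ioc 0 t₀) with hρdef
  haveI : IsFiniteMeasure ρ := by
    constructor
    rw [hρdef, Measure.restrict_apply_univ]
    exact measure_Ioc_lt_top
  -- the "rest" of the equation
  set Rf : ℝ → ℝ → ℝ := fun s x =>
    pd (pd (pd (v s))) x - pd (pd (v s)) x + l0' x * v s x + l' x * v (s - τ) x
      + v s x * pd (v s) x with hRfdef
  have hVmeas : Measurable fun p : ℝ × ℝ => v p.2 p.1 :=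
    ((joint_cont hv_cont).comp continuous_swap).measurable
  have hRfmeas : Measurable fun p : ℝ × ℝ => Rf p.2 p.1 := by
    have m3 : Measurable fun p : ℝ × ℝ => pd (pd (pd (v p.2))) p.1 :=
      ((joint_cont hvc3).comp continuous_swap).measurable
    have m2 : Measurable fun p : ℝ × ℝ => pd (pd (v p.2)) p.1 :=
      ((joint_cont hvc2).comp continuous_swap).measurable
    have m1 : Measurable fun p : ℝ × ℝ => pd (v p.2) p.1 :=
      ((joint_cont hvc1).comp continuous_swap).measurable
    have mm : Measurable fun p : ℝ × ℝ => v (p.2 - τ) p.1 :=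
      ((joint_cont hvcm).comp continuous_swap).measurable
    have ml0 : Measurable fun p : ℝ × ℝ => l0' p.1 := hm0.measurable.comp measurable_fst
    have ml1 : Measurable fun p : ℝ × ℝ => l' p.1 := hm1.measurable.comp measurable_fst
    simp only [hRfdef]
    exact (((m3.sub m2).add (ml0.mul hVmeas)).add (ml1.mul mm)).add (hVmeas.mul m1)
  -- the defect vanishes a.e. on the product
  have hgood : ∀ᵐ x : ℝ ∂(volume : Measure ℝ), ∀ᵐ s ∂ρ, T (s, x) + Rf s x = 0 := by
    have hDmeas : Measurable fun p : ℝ × ℝ => T (p.2, p.1) + Rf p.2 p.1 := by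
      refine Measurable.add ?_ hRfmeas
      exact hTmeas.comp measurable_swap
    have hDset : MeasurableSet {p : ℝ × ℝ | ¬ T (p.2, p.1) + Rf p.2 p.1 = 0} := by
      have h := hDmeas (MeasurableSet.compl (measurableSet_singleton (0 : ℝ)))
      have e : {p : ℝ × ℝ | ¬ T (p.2, p.1) + Rf p.2 p.1 = 0}
          = (fun p : ℝ × ℝ => T (p.2, p.1) + Rf p.2 p.1) ⁻¹' ({(0 : ℝ)}ᶜ) := by
        ext p; simp
      rw [e]; exact h
    apply Measure.ae_ae_of_ae_prod (μ := (volume : Measure ℝ)) (ν := ρ)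
      (p := fun p : ℝ × ℝ => T (p.2, p.1) + Rf p.2 p.1 = 0)
    rw [ae_iff, Measure.prod_apply_symm hDset]
    have hz : (fun s => (volume : Measure ℝ)
          ((fun x => (x, s)) ⁻¹' {p : ℝ × ℝ | ¬ T (p.2, p.1) + Rf p.2 p.1 = 0}))
        =ᵐ[ρ] (fun _ => (0 : ENNReal)) := by
      filter_upwards [ae_restrict_mem measurableSet_Ioc] with s hs
      have hs0 : (0 : ℝ) < s := hs.1
      have hae : ∀ᵐ x : ℝ ∂(volume : Measure ℝ), T (s, x) + Rf s x = 0 := by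
        filter_upwards [heq s hs0, hl0ae, hlae] with x hx h0x h1x
        have hT : T (s, x) = ut s x := if_pos hs0
        have hv1 : v s = u s := hveq _ (by linarith)
        have hv2 : v (s - τ) = u (s - τ) := hveq _ (by linarith)
        simp only [hRfdef, hT, hv1, hv2, ← h0x, ← h1x]
        linarith [hx]
      rw [ae_iff] at hae
      exact hae
    rw [lintegral_congr_ae hz, lintegral_zero]
  -- pointwise FTC
  have hP : ∀ᵐ x : ℝ ∂(volume : Measure ℝ),
      (v t₀ x) ^ 2 - (v 0 x) ^ 2 = ∫ s, (-2) * (v s x * Rf s x) ∂ρ := by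
    filter_upwards [hgood] with x hx
    have hfc : Continuous fun s => (v s x) ^ 2 := (curve_eval_cont hv_cont x).pow 2
    have hgc : Continuous fun s => (-2) * (v s x * Rf s x) := by
      simp only [hRfdef]
      exact continuous_const.mul ((curve_eval_cont hv_cont x).mul
        (((((curve_eval_cont hvc3 x).sub (curve_eval_cont hvc2 x)).add
          (continuous_const.mul (curve_eval_cont hv_cont x))).add
          (continuous_const.mul (curve_eval_cont hvcm x))).add
          ((curve_eval_cont hv_cont x).mul (curve_eval_cont hvc1 x))))
    have hder : ∀ s ∈ Set.Ioo (0 : ℝ) t₀,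
        HasDerivAt (fun σ => (v σ x) ^ 2) (2 * v s x * T (s, x)) s := by
      intro s hs
      have hu := hu_deriv s hs.1 x
      have hev : (fun σ => v σ x) =ᶠ[nhds s] (fun σ => u σ x) := by
        filter_upwards [eventually_gt_nhds hs.1] with σ hσ
        rw [hveq σ (by linarith)]
      have hv' : HasDerivAt (fun σ => v σ x) (ut s x) s := hu.congr_of_eventuallyEq hev
      have hT : T (s, x) = ut s x := if_pos hs.1
      have h2 := hv'.pow 2
      rw [hT]
      refine h2.congr_deriv ?_
      push_cast
      ring
    have hae : (fun s => 2 * v s x * T (s, x))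
        =ᵐ[ρ] (fun s => (-2) * (v s x * Rf s x)) := by
      filter_upwards [hx] with s hsx
      have hTs : T (s, x) = -(Rf s x) := by linarith
      rw [hTs]; ring
    exact ftc_pointwise ht₀pos (fun s => (v s x) ^ 2)
      (fun s => 2 * v s x * T (s, x)) (fun s => (-2) * (v s x * Rf s x)) hfc hder hgc hae
  -- compact bounds
  obtain ⟨C, hCnn, hC⟩ : ∃ C : ℝ, 0 ≤ C ∧ ∀ σ ∈ Set.Icc (-τ) t₀,
      sem (v σ) ≤ C ∧ sem (pd (v σ)) ≤ C ∧ sem (pd (pd (v σ))) ≤ C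
        ∧ sem (pd (pd (pd (v σ)))) ≤ C := by
    have hh : Continuous fun σ => sem (v σ) + sem (pd (v σ)) + sem (pd (pd (v σ)))
        + sem (pd (pd (pd (v σ)))) :=
      (((continuous_sem.comp hv_cont).add (continuous_sem.comp hvc1)).add
        (continuous_sem.comp hvc2)).add (continuous_sem.comp hvc3)
    obtain ⟨C, hC⟩ := (isCompact_Icc : IsCompact (Set.Icc (-τ) t₀)).exists_bound_of_continuousOn
      hh.continuousOn
    refine ⟨max C 0, le_max_right _ _, ?_⟩
    intro σ hσ
    have h1 := hC σ hσ
    rw [Real.norm_eq_abs] at h1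
    have h2 : sem (v σ) + sem (pd (v σ)) + sem (pd (pd (v σ))) + sem (pd (pd (pd (v σ))))
        ≤ max C 0 := le_trans (le_trans (le_abs_self _) h1) (le_max_left _ _)
    have n0 := sem_nonneg (v σ)
    have n1 := sem_nonneg (pd (v σ))
    have n2 := sem_nonneg (pd (pd (v σ)))
    have n3 := sem_nonneg (pd (pd (pd (v σ))))
    exact ⟨by linarith, by linarith, by linarith, by linarith⟩
  -- a.e. facts on the product measure
  have hx2 : ∀ x : ℝ, (0 : ℝ) ≤ (1 + x ^ 2)⁻¹ := fun x => by positivity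
  have hb0p : ∀ᵐ p : ℝ × ℝ ∂((volume : Measure ℝ).prod ρ), ‖l0' p.1‖ ≤ c0 :=
    Measure.quasiMeasurePreserving_fst.ae hb0
  have hb1p : ∀ᵐ p : ℝ × ℝ ∂((volume : Measure ℝ).prod ρ), ‖l' p.1‖ ≤ c1 :=
    Measure.quasiMeasurePreserving_fst.ae hb1
  have hsp : ∀ᵐ p : ℝ × ℝ ∂((volume : Measure ℝ).prod ρ), p.2 ∈ Set.Ioc (0 : ℝ) t₀ :=
    Measure.quasiMeasurePreserving_snd.ae (ae_restrict_mem measurableSet_Ioc)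
  have hsK : ∀ s ∈ Set.Ioc (0 : ℝ) t₀, s ∈ Set.Icc (-τ) t₀ ∧ s - τ ∈ Set.Icc (-τ) t₀ := by
    intro s hs
    exact ⟨⟨by linarith [hs.1], hs.2⟩, ⟨by linarith [hs.1], by linarith [hs.2]⟩⟩
  have hRfbd : ∀ s ∈ Set.Ioc (0 : ℝ) t₀, ∀ x : ℝ, ‖l0' x‖ ≤ c0 → ‖l' x‖ ≤ c1 →
      |Rf s x| ≤ (C + C + c0 * C + c1 * C + C * C) * (1 + x ^ 2)⁻¹ := by
    intro s hs x h0x h1x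
    obtain ⟨hsK1, hsK2⟩ := hsK s hs
    obtain ⟨hC0, hC1, hC2, hC3⟩ := hC s hsK1
    obtain ⟨hC0', -, -, -⟩ := hC (s - τ) hsK2
    have e3 : |pd (pd (pd (v s))) x| ≤ C * (1 + x ^ 2)⁻¹ :=
      le_trans (abs_le_sem_div _ x) (mul_le_mul_of_nonneg_right hC3 (hx2 x))
    have e2 : |pd (pd (v s)) x| ≤ C * (1 + x ^ 2)⁻¹ :=
      le_trans (abs_le_sem_div _ x) (mul_le_mul_of_nonneg_right hC2 (hx2 x))
    have e1 : |pd (v s) x| ≤ C * (1 + x ^ 2)⁻¹ :=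
      le_trans (abs_le_sem_div _ x) (mul_le_mul_of_nonneg_right hC1 (hx2 x))
    have e0d : |v s x| ≤ C * (1 + x ^ 2)⁻¹ :=
      le_trans (abs_le_sem_div _ x) (mul_le_mul_of_nonneg_right hC0 (hx2 x))
    have e0 : |v s x| ≤ C := le_trans (abs_le_sem' _ _) hC0
    have em : |v (s - τ) x| ≤ C * (1 + x ^ 2)⁻¹ :=
      le_trans (abs_le_sem_div _ x) (mul_le_mul_of_nonneg_right hC0' (hx2 x))
    have t3 : |l0' x * v s x| ≤ c0 * (C * (1 + x ^ 2)⁻¹) := by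
      rw [abs_mul]
      refine mul_le_mul ?_ e0d (abs_nonneg _) hc0nn
      rwa [Real.norm_eq_abs] at h0x
    have t4 : |l' x * v (s - τ) x| ≤ c1 * (C * (1 + x ^ 2)⁻¹) := by
      rw [abs_mul]
      refine mul_le_mul ?_ em (abs_nonneg _) hc1nn
      rwa [Real.norm_eq_abs] at h1x
    have t5 : |v s x * pd (v s) x| ≤ C * (C * (1 + x ^ 2)⁻¹) := by
      rw [abs_mul]
      exact mul_le_mul e0 e1 (abs_nonneg _) hCnn
    have habs : |Rf s x| ≤ |pd (pd (pd (v s))) x| + |pd (pd (v s)) x| + |l0' x * v s x|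
        + |l' x * v (s - τ) x| + |v s x * pd (v s) x| := by
      simp only [hRfdef]
      exact abs_add5 _ _ _ _ _
    calc |Rf s x| ≤ _ := habs
      _ ≤ C * (1 + x ^ 2)⁻¹ + C * (1 + x ^ 2)⁻¹ + c0 * (C * (1 + x ^ 2)⁻¹)
          + c1 * (C * (1 + x ^ 2)⁻¹) + C * (C * (1 + x ^ 2)⁻¹) :=
        add_le_add (add_le_add (add_le_add (add_le_add e3 e2) t3) t4) t5
      _ = (C + C + c0 * C + c1 * C + C * C) * (1 + x ^ 2)⁻¹ := by ring
  have hboundint : ∀ M : ℝ, Integrable (fun p : ℝ × ℝ => M * (1 + p.1 ^ 2)⁻¹)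
      ((volume : Measure ℝ).prod ρ) := by
    intro M
    have h := (integrable_inv_one_add_sq.const_mul M).mul_prod
      (integrable_const (1 : ℝ) (μ := ρ))
    simpa using h
  -- product integrability of the main integrand
  have hFint : Integrable (Function.uncurry fun x s => (-2) * (v s x * Rf s x))
      ((volume : Measure ℝ).prod ρ) := by
    have hmeas : AEStronglyMeasurable (Function.uncurry fun x s => (-2) * (v s x * Rf s x))
        ((volume : Measure ℝ).prod ρ) := by
      apply Measurable.aestronglyMeasurable
      have : (Function.uncurry fun x s => (-2) * (v s x * Rf s x))
          = fun p : ℝ × ℝ => (-2) * (v p.2 p.1 * Rf p.2 p.1) := rfl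
      rw [this]
      exact measurable_const.mul (hVmeas.mul hRfmeas)
    refine (hboundint (2 * C * (C + C + c0 * C + c1 * C + C * C))).mono' hmeas ?_
    filter_upwards [hb0p, hb1p, hsp] with p h0 h1 hsm
    have hr := hRfbd p.2 hsm p.1 h0 h1
    have e0 : |v p.2 p.1| ≤ C := le_trans (abs_le_sem' _ _) ((hC p.2 (hsK p.2 hsm).1).1)
    show ‖(-2 : ℝ) * (v p.2 p.1 * Rf p.2 p.1)‖ ≤ _
    rw [Real.norm_eq_abs, abs_mul, abs_mul]
    have h2 : |(-2 : ℝ)| = 2 := by norm_num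
    rw [h2]
    calc 2 * (|v p.2 p.1| * |Rf p.2 p.1|)
        ≤ 2 * (C * ((C + C + c0 * C + c1 * C + C * C) * (1 + p.1 ^ 2)⁻¹)) := by
          refine mul_le_mul_of_nonneg_left (mul_le_mul e0 hr (abs_nonneg _) hCnn) (by norm_num)
      _ = 2 * C * (C + C + c0 * C + c1 * C + C * C) * (1 + p.1 ^ 2)⁻¹ := by ring
  -- swap
  have key : ∫ x : ℝ, ((v t₀ x) ^ 2 - (v 0 x) ^ 2)
      = ∫ s, (∫ x : ℝ, (-2) * (v s x * Rf s x)) ∂ρ := by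
    rw [integral_congr_ae hP]
    exact integral_integral_swap hFint
  -- spatial identity
  have hinner : ∀ s : ℝ, (∫ x : ℝ, (-2) * (v s x * Rf s x))
      = (-2) * ((∫ x : ℝ, (pd (v s) x) ^ 2) + (∫ x : ℝ, l0' x * (v s x) ^ 2)
          + (∫ x : ℝ, l' x * v (s - τ) x * v s x)) := by
    intro s
    rw [integral_const_mul, spatial_integral (v s) (v (s - τ)) l0' l' c0 c1
      hm0.aestronglyMeasurable hm1.aestronglyMeasurable hb0 hb1]
  -- integrability in s of the three pieces
  have hAint : Integrable (fun s => ∫ x : ℝ, (pd (v s) x) ^ 2) ρ := by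
    have hprod : Integrable (fun p : ℝ × ℝ => (pd (v p.2) p.1) ^ 2)
        ((volume : Measure ℝ).prod ρ) := by
      have hmeas : AEStronglyMeasurable (fun p : ℝ × ℝ => (pd (v p.2) p.1) ^ 2)
          ((volume : Measure ℝ).prod ρ) :=
        (((joint_cont hvc1).comp continuous_swap).pow 2).measurable.aestronglyMeasurable
      refine (hboundint (C * C)).mono' hmeas ?_
      filter_upwards [hsp] with p hsm
      obtain ⟨-, hC1, -, -⟩ := hC p.2 (hsK p.2 hsm).1
      have e1 : |pd (v p.2) p.1| ≤ C := le_trans (abs_le_sem' _ _) hC1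
      have e1d : |pd (v p.2) p.1| ≤ C * (1 + p.1 ^ 2)⁻¹ :=
        le_trans (abs_le_sem_div _ _) (mul_le_mul_of_nonneg_right hC1 (hx2 _))
      rw [Real.norm_eq_abs]
      calc |(pd (v p.2) p.1) ^ 2| = |pd (v p.2) p.1| * |pd (v p.2) p.1| := by
            rw [abs_pow, pow_two]
        _ ≤ C * (C * (1 + p.1 ^ 2)⁻¹) := mul_le_mul e1 e1d (abs_nonneg _) hCnn
        _ = C * C * (1 + p.1 ^ 2)⁻¹ := by ring
    exact hprod.integral_prod_right
  have hBint : Integrable (fun s => ∫ x : ℝ, l0' x * (v s x) ^ 2) ρ := by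
    have hprod : Integrable (fun p : ℝ × ℝ => l0' p.1 * (v p.2 p.1) ^ 2)
        ((volume : Measure ℝ).prod ρ) := by
      have hmeas : AEStronglyMeasurable (fun p : ℝ × ℝ => l0' p.1 * (v p.2 p.1) ^ 2)
          ((volume : Measure ℝ).prod ρ) :=
        ((hm0.measurable.comp measurable_fst).mul (hVmeas.pow_const 2)).aestronglyMeasurable
      refine (hboundint (c0 * (C * C))).mono' hmeas ?_
      filter_upwards [hb0p, hsp] with p h0 hsm
      obtain ⟨hC0, -, -, -⟩ := hC p.2 (hsK p.2 hsm).1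
      have e0 : |v p.2 p.1| ≤ C := le_trans (abs_le_sem' _ _) hC0
      have e0d : |v p.2 p.1| ≤ C * (1 + p.1 ^ 2)⁻¹ :=
        le_trans (abs_le_sem_div _ _) (mul_le_mul_of_nonneg_right hC0 (hx2 _))
      rw [Real.norm_eq_abs, abs_mul]
      rw [Real.norm_eq_abs] at h0
      calc |l0' p.1| * |(v p.2 p.1) ^ 2| = |l0' p.1| * (|v p.2 p.1| * |v p.2 p.1|) := by
            rw [abs_pow, pow_two]
        _ ≤ c0 * (C * (C * (1 + p.1 ^ 2)⁻¹)) := by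
            refine mul_le_mul h0 (mul_le_mul e0 e0d (abs_nonneg _) hCnn)
              (by positivity) hc0nn
        _ = c0 * (C * C) * (1 + p.1 ^ 2)⁻¹ := by ring
    exact hprod.integral_prod_right
  have hCint : Integrable (fun s => ∫ x : ℝ, l' x * v (s - τ) x * v s x) ρ := by
    have hprod : Integrable (fun p : ℝ × ℝ => l' p.1 * v (p.2 - τ) p.1 * v p.2 p.1)
        ((volume : Measure ℝ).prod ρ) := by
      have hmeas : AEStronglyMeasurable (fun p : ℝ × ℝ => l' p.1 * v (p.2 - τ) p.1 * v p.2 p.1)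
          ((volume : Measure ℝ).prod ρ) :=
        (((hm1.measurable.comp measurable_fst).mul
          ((joint_cont hvcm).comp continuous_swap).measurable).mul hVmeas).aestronglyMeasurable
      refine (hboundint (c1 * C * C)).mono' hmeas ?_
      filter_upwards [hb1p, hsp] with p h1 hsm
      obtain ⟨hC0, -, -, -⟩ := hC p.2 (hsK p.2 hsm).1
      obtain ⟨hC0', -, -, -⟩ := hC (p.2 - τ) (hsK p.2 hsm).2
      have e0 : |v p.2 p.1| ≤ C * (1 + p.1 ^ 2)⁻¹ :=
        le_trans (abs_le_sem_div _ _) (mul_le_mul_of_nonneg_right hC0 (hx2 _))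
      have em : |v (p.2 - τ) p.1| ≤ C := le_trans (abs_le_sem' _ _) hC0'
      rw [Real.norm_eq_abs, abs_mul, abs_mul]
      rw [Real.norm_eq_abs] at h1
      calc |l' p.1| * |v (p.2 - τ) p.1| * |v p.2 p.1|
          ≤ c1 * C * (C * (1 + p.1 ^ 2)⁻¹) := by
            refine mul_le_mul (mul_le_mul h1 em (abs_nonneg _) hc1nn) e0
              (abs_nonneg _) (by positivity)
        _ = c1 * C * C * (1 + p.1 ^ 2)⁻¹ := by ring
    exact hprod.integral_prod_right
  -- put together
  have key2 : (∫ x : ℝ, (u t₀ x) ^ 2) - (∫ x : ℝ, (u 0 x) ^ 2)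
      = (-2) * ((∫ s, (∫ x : ℝ, (pd (v s) x) ^ 2) ∂ρ)
        + (∫ s, (∫ x : ℝ, l0' x * (v s x) ^ 2) ∂ρ)
        + (∫ s, (∫ x : ℝ, l' x * v (s - τ) x * v s x) ∂ρ)) := by
    have hsq : ∀ w : 𝓢(ℝ, ℝ), Integrable (fun x => (w x) ^ 2) (volume : Measure ℝ) := by
      intro w
      have := integrable_mul w w
      simpa [pow_two] using this
    have e1 : ∫ x : ℝ, ((v t₀ x) ^ 2 - (v 0 x) ^ 2)
        = (∫ x : ℝ, (u t₀ x) ^ 2) - (∫ x : ℝ, (u 0 x) ^ 2) := by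
      rw [integral_sub (hsq (v t₀)) (hsq (v 0)), hv0, hv00]
    rw [← e1, key]
    have e2 : ∀ s : ℝ, (∫ x : ℝ, (-2) * (v s x * Rf s x))
        = (-2) * ((∫ x : ℝ, (pd (v s) x) ^ 2) + (∫ x : ℝ, l0' x * (v s x) ^ 2)
            + (∫ x : ℝ, l' x * v (s - τ) x * v s x)) := hinner
    calc ∫ s, (∫ x : ℝ, (-2) * (v s x * Rf s x)) ∂ρ
        = ∫ s, (-2) * ((∫ x : ℝ, (pd (v s) x) ^ 2) + (∫ x : ℝ, l0' x * (v s x) ^ 2)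
            + (∫ x : ℝ, l' x * v (s - τ) x * v s x)) ∂ρ := by
          exact integral_congr_ae (Eventually.of_forall e2)
      _ = (-2) * ((∫ s, (∫ x : ℝ, (pd (v s) x) ^ 2) ∂ρ)
            + (∫ s, (∫ x : ℝ, l0' x * (v s x) ^ 2) ∂ρ)
            + (∫ s, (∫ x : ℝ, l' x * v (s - τ) x * v s x) ∂ρ)) := by
          have hABint : Integrable (fun s => (∫ x : ℝ, (pd (v s) x) ^ 2)
              + ∫ x : ℝ, l0' x * (v s x) ^ 2) ρ := hAint.add hBint
          rw [integral_const_mul, integral_add hABint hCint, integral_add hAint hBint]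
  -- identify the interval integrals of the statement
  have hIA : (∫ s in (0:ℝ)..t₀, ∫ x : ℝ, (pd (u s) x) ^ 2)
      = ∫ s, (∫ x : ℝ, (pd (v s) x) ^ 2) ∂ρ := by
    rw [intervalIntegral.integral_of_le ht₀pos.le]
    refine integral_congr_ae ?_
    filter_upwards [ae_restrict_mem measurableSet_Ioc] with s hs
    rw [hveq s (by linarith [hs.1])]
  have hIB : (∫ s in (0:ℝ)..t₀, ∫ x : ℝ, l0 x * (u s x) ^ 2)
      = ∫ s, (∫ x : ℝ, l0' x * (v s x) ^ 2) ∂ρ := by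
    rw [intervalIntegral.integral_of_le ht₀pos.le]
    refine integral_congr_ae ?_
    filter_upwards [ae_restrict_mem measurableSet_Ioc] with s hs
    rw [hveq s (by linarith [hs.1])]
    exact integral_congr_ae (by filter_upwards [hl0ae] with x hx; rw [hx])
  have hIC : (∫ s in (0:ℝ)..t₀, ∫ x : ℝ, l x * u (s - τ) x * u s x)
      = ∫ s, (∫ x : ℝ, l' x * v (s - τ) x * v s x) ∂ρ := by
    rw [intervalIntegral.integral_of_le ht₀pos.le]
    refine integral_congr_ae ?_
    filter_upwards [ae_restrict_mem measurableSet_Ioc] with s hs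
    rw [hveq s (by linarith [hs.1]), hveq (s - τ) (by linarith [hs.1])]
    exact integral_congr_ae (by filter_upwards [hlae] with x hx; rw [hx])
  rw [hIA, hIB, hIC]
  linarith [key2]
end

section
/- Lipschitz estimate for the nonlinear term (Lemma 3.4, second part). Let T > 0 and let u, v : ℝ × [0, T] → ℝ be continuous, differentiable in the first variable with continuous spatial derivatives ∂_x u, ∂_x v, and such that for every t ∈ [0, T] the functions u(·,t), v(·,t), ∂_x u(·,t), ∂_x v(·,t) belong to L²(ℝ). Define ‖w‖_{𝓑_T} := sup_{t∈[0,T]} ‖w(·,t)‖₂ + ( ∫₀^T ‖∂_x w(·,t)‖₂² dt )^{1/2}, and assume ‖u‖_{𝓑_T} and ‖v‖_{𝓑_T} are finite. Then ∫₀^T ‖u(·,t)·∂_x u(·,t) − v(·,t)·∂_x v(·,t)‖₂ dt ≤ √2 · T^{1/4} · ( ‖u‖_{𝓑_T} + ‖v‖_{𝓑_T} ) · ‖u − v‖_{𝓑_T}. -/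
open MeasureTheory

/-- The `L²(ℝ)` norm of a function. -/
noncomputable def L2norm (f : ℝ → ℝ) : ℝ := (eLpNorm f 2 volume).toReal

/-- The norm of the space `𝓑_T = C([0,T]; L²(ℝ)) ∩ L²(0,T; H¹(ℝ))`, for a function
`w x t` of the space variable `x` and time `t`, with spatial derivative `wx`. -/
noncomputable def BTnorm (T : ℝ) (w wx : ℝ → ℝ → ℝ) : ℝ :=
  (⨆ t : Set.Icc (0 : ℝ) T, L2norm (fun x => w x t))
    + Real.sqrt (∫ t in (0 : ℝ)..T, (L2norm (fun x => wx x t)) ^ 2)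

namespace NLTaux

open Filter

lemma L2norm_nonneg (f : ℝ → ℝ) : 0 ≤ L2norm f := ENNReal.toReal_nonneg

variable {α : Type*} [MeasurableSpace α] {μ : Measure α}

lemma integrable_mul_of_memL2 {f g : α → ℝ} (hf : MemLp f 2 μ) (hg : MemLp g 2 μ) :
    Integrable (fun x => f x * g x) μ := by
  have h : Integrable (fun x => (f x ^ 2 + g x ^ 2) / 2) μ :=
    (hf.integrable_sq.add hg.integrable_sq).div_const 2
  refine h.mono' (hf.aestronglyMeasurable.mul hg.aestronglyMeasurable)
    (Filter.Eventually.of_forall fun x => ?_)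
  rw [Real.norm_eq_abs, abs_mul]
  nlinarith [abs_nonneg (f x), abs_nonneg (g x), sq_abs (f x), sq_abs (g x),
    sq_nonneg (|f x| - |g x|)]

lemma toReal_eLpNorm_eq {f : α → ℝ} (hf : MemLp f 2 μ) :
    (eLpNorm f 2 μ).toReal = (∫ x, ‖f x‖ ^ (2 : ℝ) ∂μ) ^ ((2 : ℝ)⁻¹) := by
  rw [hf.eLpNorm_eq_integral_rpow_norm two_ne_zero ENNReal.ofNat_ne_top]
  rw [ENNReal.toReal_ofReal]
  · norm_num
  · positivity

lemma two_conj : (2 : ℝ).HolderConjugate 2 := Real.HolderConjugate.two_two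

lemma cs_norm {f g : α → ℝ} (hf : MemLp f 2 μ) (hg : MemLp g 2 μ) :
    ∫ x, ‖f x‖ * ‖g x‖ ∂μ ≤ (eLpNorm f 2 μ).toReal * (eLpNorm g 2 μ).toReal := by
  have h2 : ENNReal.ofReal (2 : ℝ) = 2 := by norm_num
  have h := integral_mul_norm_le_Lp_mul_Lq (μ := μ) two_conj (h2.symm ▸ hf) (h2.symm ▸ hg)
  rw [toReal_eLpNorm_eq hf, toReal_eLpNorm_eq hg]
  calc ∫ x, ‖f x‖ * ‖g x‖ ∂μ
      ≤ (∫ x, ‖f x‖ ^ (2:ℝ) ∂μ) ^ ((1:ℝ)/2) * (∫ x, ‖g x‖ ^ (2:ℝ) ∂μ) ^ ((1:ℝ)/2) := h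
    _ = (∫ x, ‖f x‖ ^ (2:ℝ) ∂μ) ^ ((2:ℝ)⁻¹) * (∫ x, ‖g x‖ ^ (2:ℝ) ∂μ) ^ ((2:ℝ)⁻¹) := by
        norm_num

lemma cs_sqrt {f g : α → ℝ} (hf : MemLp f 2 μ) (hg : MemLp g 2 μ)
    (hf0 : ∀ x, 0 ≤ f x) (hg0 : ∀ x, 0 ≤ g x) :
    ∫ x, f x * g x ∂μ
      ≤ Real.sqrt (∫ x, f x ^ 2 ∂μ) * Real.sqrt (∫ x, g x ^ 2 ∂μ) := by
  have h := cs_norm hf hg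
  have e1 : ∀ x, ‖f x‖ * ‖g x‖ = f x * g x := fun x => by
    rw [Real.norm_of_nonneg (hf0 x), Real.norm_of_nonneg (hg0 x)]
  have e2 : ∀ (h : α → ℝ), (∀ x, 0 ≤ h x) → (∫ x, ‖h x‖ ^ (2:ℝ) ∂μ) = ∫ x, h x ^ 2 ∂μ := by
    intro h h0
    refine integral_congr_ae (Filter.Eventually.of_forall fun x => ?_)
    show ‖h x‖ ^ (2:ℝ) = h x ^ 2
    rw [Real.norm_of_nonneg (h0 x), show ((2:ℝ)) = ((2:ℕ) : ℝ) by norm_num,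
      Real.rpow_natCast]
  rw [toReal_eLpNorm_eq hf, toReal_eLpNorm_eq hg, e2 f hf0, e2 g hg0] at h
  have hint : ∀ (h : α → ℝ), (∫ x, h x ^ 2 ∂μ) ^ ((2:ℝ)⁻¹) = Real.sqrt (∫ x, h x ^ 2 ∂μ) := by
    intro h
    rw [Real.sqrt_eq_rpow]
    norm_num
  rw [hint f, hint g] at h
  calc ∫ x, f x * g x ∂μ = ∫ x, ‖f x‖ * ‖g x‖ ∂μ :=
        integral_congr_ae (Filter.Eventually.of_forall fun x => (e1 x).symm)
    _ ≤ _ := h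

lemma limit_zero_of_integrable {g : ℝ → ℝ} (hg : Integrable g volume) {L : ℝ}
    (h : Tendsto g atTop (nhds L)) : L = 0 := by
  by_contra hL
  have hL2 : ‖L‖ / 2 < ‖L‖ := half_lt_self (norm_pos_iff.2 hL)
  have h2 : ∀ᶠ y in atTop, ‖L‖ / 2 < ‖g y‖ := h.norm.eventually (eventually_gt_nhds hL2)
  obtain ⟨M, hM⟩ := eventually_atTop.1 h2
  have hconst : Integrable (fun _ : ℝ => ‖L‖ / 2) (volume.restrict (Set.Ioi M)) := by
    refine (hg.restrict (s := Set.Ioi M)).norm.mono' aestronglyMeasurable_const ?_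
    refine (ae_restrict_iff' measurableSet_Ioi).2 (Filter.Eventually.of_forall fun y hy => ?_)
    rw [Real.norm_of_nonneg (by positivity : (0:ℝ) ≤ ‖L‖ / 2)]
    exact (hM y hy.le).le
  rw [integrable_const_iff] at hconst
  rcases hconst with h' | h'
  · have : ‖L‖ ≠ 0 := norm_ne_zero_iff.2 hL
    simp only [div_eq_zero_iff] at h'
    rcases h' with h' | h'
    · exact this h'
    · norm_num at h'
  · have h'' := measure_lt_top (volume.restrict (Set.Ioi M)) Set.univ
    rw [Measure.restrict_apply_univ, Real.volume_Ioi] at h''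
    exact (lt_irrefl _ h'').elim

lemma sq_le_agmon {f f' : ℝ → ℝ} (hd : ∀ x, HasDerivAt f (f' x) x)
    (hf : MemLp f 2 volume) (hf' : MemLp f' 2 volume) (x : ℝ) :
    f x ^ 2 ≤ 2 * (L2norm f * L2norm f') := by
  set h : ℝ → ℝ := fun y => 2 * (f y * f' y) with hh_def
  have hint : Integrable h volume := (integrable_mul_of_memL2 hf hf').const_mul 2
  have hderiv : ∀ y, HasDerivAt (fun z => f z ^ 2) (h y) y := by
    intro y
    have : HasDerivAt (fun z => f z ^ 2) ((2:ℕ) * f y ^ (2 - 1) * f' y) y := (hd y).pow 2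
    simpa [hh_def, pow_one, mul_assoc] using this
  have hFTC : ∀ y : ℝ, ∫ s in x..y, h s = f y ^ 2 - f x ^ 2 := fun y =>
    intervalIntegral.integral_eq_sub_of_hasDerivAt (fun s _ => hderiv s)
      hint.intervalIntegrable
  have htt : Tendsto (fun y => ∫ s in x..y, h s) atTop (nhds (∫ s in Set.Ioi x, h s)) :=
    intervalIntegral_tendsto_integral_Ioi x hint.integrableOn tendsto_id
  have hgt : Tendsto (fun y => f y ^ 2) atTop (nhds (f x ^ 2 + ∫ s in Set.Ioi x, h s)) := by
    have h2 := htt.const_add (f x ^ 2)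
    refine h2.congr fun y => ?_
    rw [hFTC y]; ring
  have hL0 : f x ^ 2 + ∫ s in Set.Ioi x, h s = 0 :=
    limit_zero_of_integrable hf.integrable_sq hgt
  have h1 : f x ^ 2 = - ∫ s in Set.Ioi x, h s := by linarith
  have h2 : - ∫ s in Set.Ioi x, h s ≤ ∫ s in Set.Ioi x, ‖h s‖ := by
    calc - ∫ s in Set.Ioi x, h s ≤ |∫ s in Set.Ioi x, h s| := neg_le_abs _
      _ ≤ ∫ s in Set.Ioi x, ‖h s‖ := by
          rw [← Real.norm_eq_abs]
          exact norm_integral_le_integral_norm _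
  have h3 : ∫ s in Set.Ioi x, ‖h s‖ ≤ ∫ s, ‖h s‖ :=
    setIntegral_le_integral hint.norm (Filter.Eventually.of_forall fun s => norm_nonneg _)
  have h4 : ∫ s, ‖h s‖ ≤ 2 * (L2norm f * L2norm f') := by
    have : ∀ s, ‖h s‖ = 2 * (‖f s‖ * ‖f' s‖) := fun s => by
      rw [hh_def]
      simp [abs_mul, Real.norm_eq_abs, mul_assoc]
    rw [integral_congr_ae (Filter.Eventually.of_forall this), integral_const_mul]
    have := cs_norm hf hf'
    unfold L2norm
    linarith
  linarith

lemma memL2_mul_of_bound {φ g : ℝ → ℝ} (hφ : AEStronglyMeasurable φ volume) {M : ℝ}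
    (hb : ∀ x, |φ x| ≤ M) (hg : MemLp g 2 volume) :
    MemLp (fun x => φ x * g x) 2 volume := by
  refine (hg.const_mul M).of_le (hφ.mul hg.aestronglyMeasurable)
    (Filter.Eventually.of_forall fun x => ?_)
  simp only [Real.norm_eq_abs, abs_mul]
  exact mul_le_mul_of_nonneg_right ((hb x).trans (le_abs_self M)) (abs_nonneg _)

lemma L2norm_mul_le {φ g : ℝ → ℝ} {M : ℝ} (hM : 0 ≤ M)
    (hb : ∀ x, |φ x| ≤ M) (hg : MemLp g 2 volume) :
    L2norm (fun x => φ x * g x) ≤ M * L2norm g := by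
  have h1 : eLpNorm (fun x => φ x * g x) 2 volume ≤ eLpNorm (fun x => M * g x) 2 volume := by
    refine eLpNorm_mono fun x => ?_
    simp only [Real.norm_eq_abs, abs_mul, abs_of_nonneg hM]
    exact mul_le_mul_of_nonneg_right (hb x) (abs_nonneg _)
  have h2 : eLpNorm (fun x => M * g x) 2 volume = (‖M‖₊ : ENNReal) * eLpNorm g 2 volume := by
    have := eLpNorm_const_smul (M : ℝ) g 2 (volume : Measure ℝ)
    rw [← enorm_eq_nnnorm]; exact this
  unfold L2norm
  calc (eLpNorm (fun x => φ x * g x) 2 volume).toReal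
      ≤ ((‖M‖₊ : ENNReal) * eLpNorm g 2 volume).toReal := by
        refine ENNReal.toReal_mono (ENNReal.mul_ne_top ENNReal.coe_ne_top hg.eLpNorm_ne_top)
          (h1.trans_eq h2)
    _ = M * (eLpNorm g 2 volume).toReal := by
        rw [ENNReal.toReal_mul, ENNReal.coe_toReal, coe_nnnorm, Real.norm_of_nonneg hM]

lemma L2norm_add_le {f g : ℝ → ℝ} (hf : MemLp f 2 volume) (hg : MemLp g 2 volume) :
    L2norm (fun x => f x + g x) ≤ L2norm f + L2norm g := by
  have h : eLpNorm (f + g) 2 volume ≤ eLpNorm f 2 volume + eLpNorm g 2 volume :=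
    eLpNorm_add_le hf.aestronglyMeasurable hg.aestronglyMeasurable one_le_two
  unfold L2norm
  rw [← ENNReal.toReal_add hf.eLpNorm_ne_top hg.eLpNorm_ne_top]
  exact ENNReal.toReal_mono
    (ENNReal.add_ne_top.2 ⟨hf.eLpNorm_ne_top, hg.eLpNorm_ne_top⟩) h

lemma L2norm_sub_le {f g : ℝ → ℝ} (hf : MemLp f 2 volume) (hg : MemLp g 2 volume) :
    L2norm (fun x => f x - g x) ≤ L2norm f + L2norm g := by
  have h := L2norm_add_le hf hg.neg
  have e : L2norm (-g) = L2norm g := by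
    unfold L2norm
    rw [eLpNorm_neg]
  simpa [sub_eq_add_neg, e, Pi.neg_apply] using h

lemma exists_measurable_L2slice {T : ℝ} (hT : 0 ≤ T) {g : ℝ → ℝ → ℝ}
    (hc : ContinuousOn (fun q : ℝ × ℝ => g q.1 q.2) (Set.univ ×ˢ Set.Icc 0 T)) :
    ∃ G : ℝ → ℝ, Measurable G ∧ ∀ t ∈ Set.Icc (0 : ℝ) T, G t = L2norm (fun x => g x t) := by
  set φ : ℝ → ℝ := fun t => max 0 (min t T) with hφ_def
  have hφc : Continuous φ := continuous_const.max (continuous_id.min continuous_const)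
  have hmem : ∀ t, φ t ∈ Set.Icc (0 : ℝ) T :=
    fun t => ⟨le_max_left _ _, max_le hT (min_le_right _ _)⟩
  have hG : Continuous (fun q : ℝ × ℝ => g q.2 (φ q.1)) := by
    refine hc.comp_continuous (continuous_snd.prodMk (hφc.comp continuous_fst))
      fun q => ⟨Set.mem_univ _, hmem _⟩
  refine ⟨fun t => ((∫⁻ x, ((‖g x (φ t)‖₊ : ENNReal)) ^ (2:ℝ)) ^ ((1:ℝ)/2)).toReal, ?_, ?_⟩
  · have hm : Measurable (fun q : ℝ × ℝ => ((‖g q.2 (φ q.1)‖₊ : ENNReal)) ^ (2:ℝ)) :=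
      ENNReal.continuous_rpow_const.measurable.comp
        hG.measurable.nnnorm.coe_nnreal_ennreal
    have hmL : Measurable fun t => ∫⁻ x, ((‖g x (φ t)‖₊ : ENNReal)) ^ (2:ℝ) :=
      Measurable.lintegral_prod_right' hm
    exact ((ENNReal.continuous_rpow_const.measurable.comp hmL)).ennreal_toReal
  · intro t ht
    have hφt : φ t = t := by
      rw [hφ_def]
      simp only []
      rw [min_eq_left ht.2, max_eq_right ht.1]
    show ((∫⁻ x, ((‖g x (φ t)‖₊ : ENNReal)) ^ (2:ℝ)) ^ ((1:ℝ)/2)).toReal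
      = L2norm fun x => g x t
    rw [hφt]
    unfold L2norm
    rw [eLpNorm_eq_lintegral_rpow_enorm_toReal two_ne_zero ENNReal.ofNat_ne_top]
    norm_num
    simp only [enorm_eq_nnnorm]

end NLTaux

namespace NLTaux

lemma memL2_sub {f g : ℝ → ℝ} (hf : MemLp f 2 volume) (hg : MemLp g 2 volume) :
    MemLp (fun x => f x - g x) 2 volume := hf.sub hg

lemma sqrt_mul_le_add {x y : ℝ} (hx : 0 ≤ x) (hy : 0 ≤ y) : Real.sqrt (x * y) ≤ x + y := by
  have h := Real.sqrt_le_sqrt (by nlinarith : x * y ≤ (x + y) ^ 2)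
  rwa [Real.sqrt_sq (by positivity)] at h

lemma quarter_pow {T : ℝ} (hT : 0 ≤ T) :
    Real.sqrt (Real.sqrt T) = T ^ ((1 : ℝ) / 4) := by
  rw [Real.sqrt_eq_rpow, Real.sqrt_eq_rpow, ← Real.rpow_mul hT]
  norm_num

lemma assemble {T Mu Mv Mw A B C i1 i2 : ℝ}
    (hT : 0 ≤ T) (hMu : 0 ≤ Mu) (hMv : 0 ≤ Mv) (hMw : 0 ≤ Mw)
    (hA : 0 ≤ A) (hB : 0 ≤ B) (hC : 0 ≤ C)
    (h1 : i1 ≤ Real.sqrt (Real.sqrt T) * (Real.sqrt (Real.sqrt A) * Real.sqrt C))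
    (h2 : i2 ≤ Real.sqrt (Real.sqrt T) * (Real.sqrt (Real.sqrt C) * Real.sqrt B)) :
    Real.sqrt (2 * Mu) * i1 + Real.sqrt (2 * Mw) * i2
      ≤ Real.sqrt 2 * T ^ ((1 : ℝ) / 4) * ((Mu + Real.sqrt A) + (Mv + Real.sqrt B)) *
          (Mw + Real.sqrt C) := by
  have e2Mu : Real.sqrt (2 * Mu) = Real.sqrt 2 * Real.sqrt Mu :=
    Real.sqrt_mul (by norm_num) Mu
  have e2Mw : Real.sqrt (2 * Mw) = Real.sqrt 2 * Real.sqrt Mw :=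
    Real.sqrt_mul (by norm_num) Mw
  have eA : Real.sqrt Mu * Real.sqrt (Real.sqrt A) = Real.sqrt (Mu * Real.sqrt A) :=
    (Real.sqrt_mul hMu _).symm
  have eC : Real.sqrt Mw * Real.sqrt (Real.sqrt C) = Real.sqrt (Mw * Real.sqrt C) :=
    (Real.sqrt_mul hMw _).symm
  have bA : Real.sqrt (Mu * Real.sqrt A) ≤ Mu + Real.sqrt A :=
    sqrt_mul_le_add hMu (Real.sqrt_nonneg A)
  have bC : Real.sqrt (Mw * Real.sqrt C) ≤ Mw + Real.sqrt C :=
    sqrt_mul_le_add hMw (Real.sqrt_nonneg C)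
  calc Real.sqrt (2 * Mu) * i1 + Real.sqrt (2 * Mw) * i2
      ≤ Real.sqrt (2 * Mu) *
          (Real.sqrt (Real.sqrt T) * (Real.sqrt (Real.sqrt A) * Real.sqrt C))
        + Real.sqrt (2 * Mw) *
          (Real.sqrt (Real.sqrt T) * (Real.sqrt (Real.sqrt C) * Real.sqrt B)) :=
        add_le_add (mul_le_mul_of_nonneg_left h1 (Real.sqrt_nonneg _))
          (mul_le_mul_of_nonneg_left h2 (Real.sqrt_nonneg _))
    _ = Real.sqrt 2 * Real.sqrt (Real.sqrt T) *
          ((Real.sqrt Mu * Real.sqrt (Real.sqrt A)) * Real.sqrt C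
            + (Real.sqrt Mw * Real.sqrt (Real.sqrt C)) * Real.sqrt B) := by
        rw [e2Mu, e2Mw]; ring
    _ ≤ Real.sqrt 2 * Real.sqrt (Real.sqrt T) *
          ((Mu + Real.sqrt A) * Real.sqrt C + (Mw + Real.sqrt C) * Real.sqrt B) := by
        refine mul_le_mul_of_nonneg_left (add_le_add ?_ ?_) (by positivity)
        · exact mul_le_mul_of_nonneg_right (eA ▸ bA) (Real.sqrt_nonneg _)
        · exact mul_le_mul_of_nonneg_right (eC ▸ bC) (Real.sqrt_nonneg _)
    _ ≤ Real.sqrt 2 * Real.sqrt (Real.sqrt T) *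
          ((Mu + Real.sqrt A) * (Mw + Real.sqrt C)
            + (Mw + Real.sqrt C) * (Mv + Real.sqrt B)) := by
        refine mul_le_mul_of_nonneg_left (add_le_add ?_ ?_) (by positivity)
        · exact mul_le_mul_of_nonneg_left (le_add_of_nonneg_left hMw) (by positivity)
        · exact mul_le_mul_of_nonneg_left (le_add_of_nonneg_left hMv) (by positivity)
    _ = Real.sqrt 2 * Real.sqrt (Real.sqrt T) *
          ((Mu + Real.sqrt A) + (Mv + Real.sqrt B)) * (Mw + Real.sqrt C) := by ring
    _ = _ := by rw [quarter_pow hT]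

end NLTaux

open NLTaux Filter in
/-- Lemma 3.4, second part: Lipschitz estimate for the nonlinear term.
Here `u x t`, `v x t` denote values at the point `x ∈ ℝ` and time `t ∈ [0, T]`,
and `ux`, `vx` are the derivatives in the first (spatial) variable.  The boundedness
and integrability hypotheses express that `‖u‖_{𝓑_T}` and `‖v‖_{𝓑_T}` are finite. -/
theorem nonlinear_term_lipschitz_estimate
    (T : ℝ) (hT : 0 < T)
    (u ux v vx : ℝ → ℝ → ℝ)
    (hu_cont : ContinuousOn (fun q : ℝ × ℝ => u q.1 q.2) (Set.univ ×ˢ Set.Icc 0 T))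
    (hux_cont : ContinuousOn (fun q : ℝ × ℝ => ux q.1 q.2) (Set.univ ×ˢ Set.Icc 0 T))
    (hv_cont : ContinuousOn (fun q : ℝ × ℝ => v q.1 q.2) (Set.univ ×ˢ Set.Icc 0 T))
    (hvx_cont : ContinuousOn (fun q : ℝ × ℝ => vx q.1 q.2) (Set.univ ×ˢ Set.Icc 0 T))
    (hu_deriv : ∀ t ∈ Set.Icc (0 : ℝ) T, ∀ x : ℝ,
      HasDerivAt (fun y => u y t) (ux x t) x)
    (hv_deriv : ∀ t ∈ Set.Icc (0 : ℝ) T, ∀ x : ℝ,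
      HasDerivAt (fun y => v y t) (vx x t) x)
    (hu_L2 : ∀ t ∈ Set.Icc (0 : ℝ) T, MemLp (fun x => u x t) 2 (volume : Measure ℝ))
    (hux_L2 : ∀ t ∈ Set.Icc (0 : ℝ) T, MemLp (fun x => ux x t) 2 (volume : Measure ℝ))
    (hv_L2 : ∀ t ∈ Set.Icc (0 : ℝ) T, MemLp (fun x => v x t) 2 (volume : Measure ℝ))
    (hvx_L2 : ∀ t ∈ Set.Icc (0 : ℝ) T, MemLp (fun x => vx x t) 2 (volume : Measure ℝ))
    (hu_bdd : BddAbove (Set.range fun t : Set.Icc (0 : ℝ) T => L2norm (fun x => u x t)))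
    (hv_bdd : BddAbove (Set.range fun t : Set.Icc (0 : ℝ) T => L2norm (fun x => v x t)))
    (hux_int : IntervalIntegrable (fun t => (L2norm (fun x => ux x t)) ^ 2) volume 0 T)
    (hvx_int : IntervalIntegrable (fun t => (L2norm (fun x => vx x t)) ^ 2) volume 0 T) :
    (∫ t in (0 : ℝ)..T, L2norm (fun x => u x t * ux x t - v x t * vx x t))
      ≤ Real.sqrt 2 * T ^ ((1 : ℝ) / 4) * (BTnorm T u ux + BTnorm T v vx) *
          BTnorm T (fun x t => u x t - v x t) (fun x t => ux x t - vx x t) := by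
  have hT0 : (0 : ℝ) ≤ T := hT.le
  have hIocIcc : Set.Ioc (0 : ℝ) T ⊆ Set.Icc 0 T := Set.Ioc_subset_Icc_self
  -- slice membership for differences
  have hw_L2 : ∀ t ∈ Set.Icc (0 : ℝ) T, MemLp (fun x => u x t - v x t) 2 volume :=
    fun t ht => memL2_sub (hu_L2 t ht) (hv_L2 t ht)
  have hwx_L2 : ∀ t ∈ Set.Icc (0 : ℝ) T, MemLp (fun x => ux x t - vx x t) 2 volume :=
    fun t ht => memL2_sub (hux_L2 t ht) (hvx_L2 t ht)
  -- suprema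
  set Mu := ⨆ t : Set.Icc (0 : ℝ) T, L2norm (fun x => u x t) with hMu_def
  set Mv := ⨆ t : Set.Icc (0 : ℝ) T, L2norm (fun x => v x t) with hMv_def
  have hw_bdd : BddAbove
      (Set.range fun t : Set.Icc (0 : ℝ) T => L2norm (fun x => u x t - v x t)) := by
    refine ⟨Mu + Mv, ?_⟩
    rintro y ⟨t, rfl⟩
    calc L2norm (fun x => u x t - v x t)
        ≤ L2norm (fun x => u x t) + L2norm (fun x => v x t) :=
          L2norm_sub_le (hu_L2 t t.2) (hv_L2 t t.2)
      _ ≤ Mu + Mv := add_le_add (le_ciSup hu_bdd t) (le_ciSup hv_bdd t)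
  set Mw := ⨆ t : Set.Icc (0 : ℝ) T, L2norm (fun x => u x t - v x t) with hMw_def
  have hMu_le : ∀ t (ht : t ∈ Set.Icc (0 : ℝ) T), L2norm (fun x => u x t) ≤ Mu :=
    fun t ht => le_ciSup hu_bdd ⟨t, ht⟩
  have hMv_le : ∀ t (ht : t ∈ Set.Icc (0 : ℝ) T), L2norm (fun x => v x t) ≤ Mv :=
    fun t ht => le_ciSup hv_bdd ⟨t, ht⟩
  have hMw_le : ∀ t (ht : t ∈ Set.Icc (0 : ℝ) T),
      L2norm (fun x => u x t - v x t) ≤ Mw :=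
    fun t ht => le_ciSup hw_bdd ⟨t, ht⟩
  have h0T : (0 : ℝ) ∈ Set.Icc (0 : ℝ) T := ⟨le_refl _, hT0⟩
  have hMu0 : 0 ≤ Mu := le_trans (L2norm_nonneg _) (hMu_le 0 h0T)
  have hMv0 : 0 ≤ Mv := le_trans (L2norm_nonneg _) (hMv_le 0 h0T)
  have hMw0 : 0 ≤ Mw := le_trans (L2norm_nonneg _) (hMw_le 0 h0T)
  -- the key pointwise (in time) estimate
  have key : ∀ t ∈ Set.Icc (0 : ℝ) T,
      L2norm (fun x => u x t * ux x t - v x t * vx x t)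
        ≤ Real.sqrt (2 * Mu) *
            (Real.sqrt (L2norm (fun x => ux x t)) * L2norm (fun x => ux x t - vx x t))
          + Real.sqrt (2 * Mw) *
            (Real.sqrt (L2norm (fun x => ux x t - vx x t)) * L2norm (fun x => vx x t)) := by
    intro t ht
    have hat0 : 0 ≤ L2norm (fun x => ux x t) := L2norm_nonneg _
    have hct0 : 0 ≤ L2norm (fun x => ux x t - vx x t) := L2norm_nonneg _
    -- Agmon for u
    have hu_ag : ∀ x, (u x t) ^ 2 ≤ (2 * Mu) * L2norm (fun x => ux x t) := by
      intro x
      have h := sq_le_agmon (fun y => hu_deriv t ht y) (hu_L2 t ht) (hux_L2 t ht) x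
      have h2 : L2norm (fun x => u x t) * L2norm (fun x => ux x t)
          ≤ Mu * L2norm (fun x => ux x t) :=
        mul_le_mul_of_nonneg_right (hMu_le t ht) hat0
      nlinarith
    have hu_bd : ∀ x, |u x t| ≤ Real.sqrt ((2 * Mu) * L2norm (fun x => ux x t)) :=
      fun x => Real.abs_le_sqrt (hu_ag x)
    -- Agmon for w = u - v
    have hw_deriv : ∀ y : ℝ, HasDerivAt (fun z => u z t - v z t) (ux y t - vx y t) y :=
      fun y => (hu_deriv t ht y).sub (hv_deriv t ht y)
    have hw_ag : ∀ x, (u x t - v x t) ^ 2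
        ≤ (2 * Mw) * L2norm (fun x => ux x t - vx x t) := by
      intro x
      have h := sq_le_agmon hw_deriv (hw_L2 t ht) (hwx_L2 t ht) x
      have h2 : L2norm (fun x => u x t - v x t) * L2norm (fun x => ux x t - vx x t)
          ≤ Mw * L2norm (fun x => ux x t - vx x t) :=
        mul_le_mul_of_nonneg_right (hMw_le t ht) hct0
      nlinarith
    have hw_bd : ∀ x, |u x t - v x t|
        ≤ Real.sqrt ((2 * Mw) * L2norm (fun x => ux x t - vx x t)) :=
      fun x => Real.abs_le_sqrt (hw_ag x)
    -- decomposition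
    have hdecomp : (fun x => u x t * ux x t - v x t * vx x t)
        = fun x => u x t * (ux x t - vx x t) + (u x t - v x t) * vx x t :=
      funext fun x => by ring
    have h1m : MemLp (fun x => u x t * (ux x t - vx x t)) 2 volume :=
      memL2_mul_of_bound (hu_L2 t ht).aestronglyMeasurable hu_bd (hwx_L2 t ht)
    have h2m : MemLp (fun x => (u x t - v x t) * vx x t) 2 volume :=
      memL2_mul_of_bound (hw_L2 t ht).aestronglyMeasurable hw_bd (hvx_L2 t ht)
    calc L2norm (fun x => u x t * ux x t - v x t * vx x t)
        = L2norm (fun x => u x t * (ux x t - vx x t) + (u x t - v x t) * vx x t) := by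
          rw [hdecomp]
      _ ≤ L2norm (fun x => u x t * (ux x t - vx x t))
            + L2norm (fun x => (u x t - v x t) * vx x t) := L2norm_add_le h1m h2m
      _ ≤ Real.sqrt ((2 * Mu) * L2norm (fun x => ux x t))
              * L2norm (fun x => ux x t - vx x t)
            + Real.sqrt ((2 * Mw) * L2norm (fun x => ux x t - vx x t))
              * L2norm (fun x => vx x t) :=
          add_le_add
            (L2norm_mul_le (Real.sqrt_nonneg _) hu_bd (hwx_L2 t ht))
            (L2norm_mul_le (Real.sqrt_nonneg _) hw_bd (hvx_L2 t ht))
      _ = _ := by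
          rw [Real.sqrt_mul (by positivity : (0:ℝ) ≤ 2 * Mu),
            Real.sqrt_mul (by positivity : (0:ℝ) ≤ 2 * Mw)]
          ring
  -- measurable versions of the slice norms
  obtain ⟨Ga, hGa_m, hGa_eq⟩ := exists_measurable_L2slice hT0 hux_cont
  obtain ⟨Gb, hGb_m, hGb_eq⟩ := exists_measurable_L2slice hT0 hvx_cont
  obtain ⟨Gc, hGc_m, hGc_eq⟩ :=
    exists_measurable_L2slice (g := fun x t => ux x t - vx x t) hT0 (hux_cont.sub hvx_cont)
  obtain ⟨GF, hGF_m, hGF_eq⟩ :=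
    exists_measurable_L2slice (g := fun x t => u x t * ux x t - v x t * vx x t) hT0
      ((hu_cont.mul hux_cont).sub (hv_cont.mul hvx_cont))
  have hae : ∀ᵐ t ∂(volume.restrict (Set.Ioc (0:ℝ) T)), t ∈ Set.Ioc (0:ℝ) T :=
    ae_restrict_mem measurableSet_Ioc
  haveI hfin : IsFiniteMeasure (volume.restrict (Set.Ioc (0:ℝ) T)) :=
    ⟨by rw [Measure.restrict_apply_univ]; exact measure_Ioc_lt_top⟩
  have haSM : AEStronglyMeasurable (fun t => L2norm (fun x => ux x t))
      (volume.restrict (Set.Ioc (0:ℝ) T)) := by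
    refine hGa_m.aestronglyMeasurable.congr ?_
    filter_upwards [hae] with t ht using hGa_eq t (hIocIcc ht)
  have hbSM : AEStronglyMeasurable (fun t => L2norm (fun x => vx x t))
      (volume.restrict (Set.Ioc (0:ℝ) T)) := by
    refine hGb_m.aestronglyMeasurable.congr ?_
    filter_upwards [hae] with t ht using hGb_eq t (hIocIcc ht)
  have hcSM : AEStronglyMeasurable (fun t => L2norm (fun x => ux x t - vx x t))
      (volume.restrict (Set.Ioc (0:ℝ) T)) := by
    refine hGc_m.aestronglyMeasurable.congr ?_
    filter_upwards [hae] with t ht using hGc_eq t (hIocIcc ht)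
  have hFSM : AEStronglyMeasurable (fun t => L2norm (fun x => u x t * ux x t - v x t * vx x t))
      (volume.restrict (Set.Ioc (0:ℝ) T)) := by
    refine hGF_m.aestronglyMeasurable.congr ?_
    filter_upwards [hae] with t ht using hGF_eq t (hIocIcc ht)
  -- integrability in time
  have ha2 : Integrable (fun t => (L2norm (fun x => ux x t)) ^ 2)
      (volume.restrict (Set.Ioc (0:ℝ) T)) :=
    (intervalIntegrable_iff_integrableOn_Ioc_of_le hT0).1 hux_int
  have hb2 : Integrable (fun t => (L2norm (fun x => vx x t)) ^ 2)
      (volume.restrict (Set.Ioc (0:ℝ) T)) :=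
    (intervalIntegrable_iff_integrableOn_Ioc_of_le hT0).1 hvx_int
  have hc_ab : ∀ᵐ t ∂(volume.restrict (Set.Ioc (0:ℝ) T)),
      L2norm (fun x => ux x t - vx x t)
        ≤ L2norm (fun x => ux x t) + L2norm (fun x => vx x t) := by
    filter_upwards [hae] with t ht
      using L2norm_sub_le (hux_L2 t (hIocIcc ht)) (hvx_L2 t (hIocIcc ht))
  have hcSq_SM : AEStronglyMeasurable (fun t => (L2norm (fun x => ux x t - vx x t)) ^ 2)
      (volume.restrict (Set.Ioc (0:ℝ) T)) :=
    (hcSM.mul hcSM).congr (Filter.Eventually.of_forall fun t => (pow_two _).symm)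
  have hc2 : Integrable (fun t => (L2norm (fun x => ux x t - vx x t)) ^ 2)
      (volume.restrict (Set.Ioc (0:ℝ) T)) := by
    refine Integrable.mono' ((ha2.const_mul 2).add (hb2.const_mul 2)) hcSq_SM ?_
    filter_upwards [hc_ab] with t h
    rw [Real.norm_of_nonneg (by positivity)]
    simp only [Pi.add_apply]
    nlinarith [L2norm_nonneg (fun x => ux x t), L2norm_nonneg (fun x => vx x t),
      L2norm_nonneg (fun x => ux x t - vx x t),
      sq_nonneg (L2norm (fun x => ux x t) - L2norm (fun x => vx x t))]
  have ha1 : Integrable (fun t => L2norm (fun x => ux x t))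
      (volume.restrict (Set.Ioc (0:ℝ) T)) := by
    refine Integrable.mono' ((integrable_const 1).add ha2) haSM
      (Filter.Eventually.of_forall fun t => ?_)
    rw [Real.norm_of_nonneg (L2norm_nonneg _)]
    simp only [Pi.add_apply]
    nlinarith [sq_nonneg ((L2norm (fun x => ux x t)) - 1)]
  have hc1 : Integrable (fun t => L2norm (fun x => ux x t - vx x t))
      (volume.restrict (Set.Ioc (0:ℝ) T)) := by
    refine Integrable.mono' ((integrable_const 1).add hc2) hcSM
      (Filter.Eventually.of_forall fun t => ?_)
    rw [Real.norm_of_nonneg (L2norm_nonneg _)]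
    simp only [Pi.add_apply]
    nlinarith [sq_nonneg ((L2norm (fun x => ux x t - vx x t)) - 1)]
  -- MemLp in time
  have haL2t : MemLp (fun t => L2norm (fun x => ux x t)) 2
      (volume.restrict (Set.Ioc (0:ℝ) T)) := (memLp_two_iff_integrable_sq haSM).2 ha2
  have hbL2t : MemLp (fun t => L2norm (fun x => vx x t)) 2
      (volume.restrict (Set.Ioc (0:ℝ) T)) := (memLp_two_iff_integrable_sq hbSM).2 hb2
  have hcL2t : MemLp (fun t => L2norm (fun x => ux x t - vx x t)) 2
      (volume.restrict (Set.Ioc (0:ℝ) T)) := (memLp_two_iff_integrable_sq hcSM).2 hc2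
  have hsqrta : MemLp (fun t => Real.sqrt (L2norm (fun x => ux x t))) 2
      (volume.restrict (Set.Ioc (0:ℝ) T)) := by
    refine (memLp_two_iff_integrable_sq
      (Real.continuous_sqrt.comp_aestronglyMeasurable haSM)).2 ?_
    refine ha1.congr (Filter.Eventually.of_forall fun t => ?_)
    exact (Real.sq_sqrt (L2norm_nonneg _)).symm
  have hsqrtc : MemLp (fun t => Real.sqrt (L2norm (fun x => ux x t - vx x t))) 2
      (volume.restrict (Set.Ioc (0:ℝ) T)) := by
    refine (memLp_two_iff_integrable_sq
      (Real.continuous_sqrt.comp_aestronglyMeasurable hcSM)).2 ?_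
    refine hc1.congr (Filter.Eventually.of_forall fun t => ?_)
    exact (Real.sq_sqrt (L2norm_nonneg _)).symm
  -- Cauchy-Schwarz in time, first application
  have hCS1 : ∫ t in Set.Ioc (0:ℝ) T,
        Real.sqrt (L2norm (fun x => ux x t)) * L2norm (fun x => ux x t - vx x t)
      ≤ Real.sqrt (∫ t in Set.Ioc (0:ℝ) T, L2norm (fun x => ux x t))
        * Real.sqrt (∫ t in Set.Ioc (0:ℝ) T, (L2norm (fun x => ux x t - vx x t)) ^ 2) := by
    have h := cs_sqrt hsqrta hcL2t (fun t => Real.sqrt_nonneg _) (fun t => L2norm_nonneg _)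
    have e : ∫ t in Set.Ioc (0:ℝ) T, (Real.sqrt (L2norm (fun x => ux x t))) ^ 2
        = ∫ t in Set.Ioc (0:ℝ) T, L2norm (fun x => ux x t) :=
      integral_congr_ae (Filter.Eventually.of_forall fun t => Real.sq_sqrt (L2norm_nonneg _))
    rwa [e] at h
  have hCS2 : ∫ t in Set.Ioc (0:ℝ) T,
        Real.sqrt (L2norm (fun x => ux x t - vx x t)) * L2norm (fun x => vx x t)
      ≤ Real.sqrt (∫ t in Set.Ioc (0:ℝ) T, L2norm (fun x => ux x t - vx x t))
        * Real.sqrt (∫ t in Set.Ioc (0:ℝ) T, (L2norm (fun x => vx x t)) ^ 2) := by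
    have h := cs_sqrt hsqrtc hbL2t (fun t => Real.sqrt_nonneg _) (fun t => L2norm_nonneg _)
    have e : ∫ t in Set.Ioc (0:ℝ) T, (Real.sqrt (L2norm (fun x => ux x t - vx x t))) ^ 2
        = ∫ t in Set.Ioc (0:ℝ) T, L2norm (fun x => ux x t - vx x t) :=
      integral_congr_ae (Filter.Eventually.of_forall fun t => Real.sq_sqrt (L2norm_nonneg _))
    rwa [e] at h
  have hone : ∫ t in Set.Ioc (0:ℝ) T, ((1:ℝ) ^ 2) = T := by
    simp only [one_pow]
    rw [setIntegral_const]
    simp [Real.volume_Ioc, ENNReal.toReal_ofReal hT0, hT0]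
  have hInta : ∫ t in Set.Ioc (0:ℝ) T, L2norm (fun x => ux x t)
      ≤ Real.sqrt T
        * Real.sqrt (∫ t in Set.Ioc (0:ℝ) T, (L2norm (fun x => ux x t)) ^ 2) := by
    have h := cs_sqrt (memLp_const (μ := volume.restrict (Set.Ioc (0:ℝ) T)) (1:ℝ)) haL2t
      (fun t => zero_le_one) (fun t => L2norm_nonneg _)
    have e1 : ∫ t in Set.Ioc (0:ℝ) T, (1:ℝ) * L2norm (fun x => ux x t)
        = ∫ t in Set.Ioc (0:ℝ) T, L2norm (fun x => ux x t) :=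
      integral_congr_ae (Filter.Eventually.of_forall fun t => one_mul _)
    rwa [e1, hone] at h
  have hIntc : ∫ t in Set.Ioc (0:ℝ) T, L2norm (fun x => ux x t - vx x t)
      ≤ Real.sqrt T
        * Real.sqrt (∫ t in Set.Ioc (0:ℝ) T, (L2norm (fun x => ux x t - vx x t)) ^ 2) := by
    have h := cs_sqrt (memLp_const (μ := volume.restrict (Set.Ioc (0:ℝ) T)) (1:ℝ)) hcL2t
      (fun t => zero_le_one) (fun t => L2norm_nonneg _)
    have e1 : ∫ t in Set.Ioc (0:ℝ) T, (1:ℝ) * L2norm (fun x => ux x t - vx x t)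
        = ∫ t in Set.Ioc (0:ℝ) T, L2norm (fun x => ux x t - vx x t) :=
      integral_congr_ae (Filter.Eventually.of_forall fun t => one_mul _)
    rwa [e1, hone] at h
  -- the two time-integral bounds
  have hi1 : ∫ t in Set.Ioc (0:ℝ) T,
        Real.sqrt (L2norm (fun x => ux x t)) * L2norm (fun x => ux x t - vx x t)
      ≤ Real.sqrt (Real.sqrt T)
        * (Real.sqrt (Real.sqrt (∫ t in Set.Ioc (0:ℝ) T, (L2norm (fun x => ux x t)) ^ 2))
          * Real.sqrt (∫ t in Set.Ioc (0:ℝ) T, (L2norm (fun x => ux x t - vx x t)) ^ 2)) := by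
    calc ∫ t in Set.Ioc (0:ℝ) T,
          Real.sqrt (L2norm (fun x => ux x t)) * L2norm (fun x => ux x t - vx x t)
        ≤ Real.sqrt (∫ t in Set.Ioc (0:ℝ) T, L2norm (fun x => ux x t))
          * Real.sqrt (∫ t in Set.Ioc (0:ℝ) T, (L2norm (fun x => ux x t - vx x t)) ^ 2) := hCS1
      _ ≤ Real.sqrt (Real.sqrt T
            * Real.sqrt (∫ t in Set.Ioc (0:ℝ) T, (L2norm (fun x => ux x t)) ^ 2))
          * Real.sqrt (∫ t in Set.Ioc (0:ℝ) T, (L2norm (fun x => ux x t - vx x t)) ^ 2) :=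
          mul_le_mul_of_nonneg_right (Real.sqrt_le_sqrt hInta) (Real.sqrt_nonneg _)
      _ = _ := by rw [Real.sqrt_mul (Real.sqrt_nonneg T)]; ring
  have hi2 : ∫ t in Set.Ioc (0:ℝ) T,
        Real.sqrt (L2norm (fun x => ux x t - vx x t)) * L2norm (fun x => vx x t)
      ≤ Real.sqrt (Real.sqrt T)
        * (Real.sqrt (Real.sqrt (∫ t in Set.Ioc (0:ℝ) T,
              (L2norm (fun x => ux x t - vx x t)) ^ 2))
          * Real.sqrt (∫ t in Set.Ioc (0:ℝ) T, (L2norm (fun x => vx x t)) ^ 2)) := by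
    calc ∫ t in Set.Ioc (0:ℝ) T,
          Real.sqrt (L2norm (fun x => ux x t - vx x t)) * L2norm (fun x => vx x t)
        ≤ Real.sqrt (∫ t in Set.Ioc (0:ℝ) T, L2norm (fun x => ux x t - vx x t))
          * Real.sqrt (∫ t in Set.Ioc (0:ℝ) T, (L2norm (fun x => vx x t)) ^ 2) := hCS2
      _ ≤ Real.sqrt (Real.sqrt T
            * Real.sqrt (∫ t in Set.Ioc (0:ℝ) T, (L2norm (fun x => ux x t - vx x t)) ^ 2))
          * Real.sqrt (∫ t in Set.Ioc (0:ℝ) T, (L2norm (fun x => vx x t)) ^ 2) :=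
          mul_le_mul_of_nonneg_right (Real.sqrt_le_sqrt hIntc) (Real.sqrt_nonneg _)
      _ = _ := by rw [Real.sqrt_mul (Real.sqrt_nonneg T)]; ring
  -- integrate the key pointwise bound
  have hD1_int : Integrable (fun t =>
      Real.sqrt (L2norm (fun x => ux x t)) * L2norm (fun x => ux x t - vx x t))
      (volume.restrict (Set.Ioc (0:ℝ) T)) := integrable_mul_of_memL2 hsqrta hcL2t
  have hD2_int : Integrable (fun t =>
      Real.sqrt (L2norm (fun x => ux x t - vx x t)) * L2norm (fun x => vx x t))
      (volume.restrict (Set.Ioc (0:ℝ) T)) := integrable_mul_of_memL2 hsqrtc hbL2t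
  have hD_int : Integrable (fun t =>
      Real.sqrt (2 * Mu) *
        (Real.sqrt (L2norm (fun x => ux x t)) * L2norm (fun x => ux x t - vx x t))
      + Real.sqrt (2 * Mw) *
        (Real.sqrt (L2norm (fun x => ux x t - vx x t)) * L2norm (fun x => vx x t)))
      (volume.restrict (Set.Ioc (0:ℝ) T)) :=
    (hD1_int.const_mul _).add (hD2_int.const_mul _)
  have hF_le : ∀ᵐ t ∂(volume.restrict (Set.Ioc (0:ℝ) T)),
      L2norm (fun x => u x t * ux x t - v x t * vx x t)
        ≤ Real.sqrt (2 * Mu) *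
            (Real.sqrt (L2norm (fun x => ux x t)) * L2norm (fun x => ux x t - vx x t))
          + Real.sqrt (2 * Mw) *
            (Real.sqrt (L2norm (fun x => ux x t - vx x t)) * L2norm (fun x => vx x t)) := by
    filter_upwards [hae] with t ht using key t (hIocIcc ht)
  have hF_int : Integrable (fun t => L2norm (fun x => u x t * ux x t - v x t * vx x t))
      (volume.restrict (Set.Ioc (0:ℝ) T)) := by
    refine hD_int.mono' hFSM ?_
    filter_upwards [hF_le] with t h
    rw [Real.norm_of_nonneg (L2norm_nonneg _)]
    exact h
  have hFD : ∫ t in Set.Ioc (0:ℝ) T, L2norm (fun x => u x t * ux x t - v x t * vx x t)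
      ≤ ∫ t in Set.Ioc (0:ℝ) T,
        (Real.sqrt (2 * Mu) *
          (Real.sqrt (L2norm (fun x => ux x t)) * L2norm (fun x => ux x t - vx x t))
        + Real.sqrt (2 * Mw) *
          (Real.sqrt (L2norm (fun x => ux x t - vx x t)) * L2norm (fun x => vx x t))) :=
    integral_mono_ae hF_int hD_int hF_le
  have hD_eq : ∫ t in Set.Ioc (0:ℝ) T,
        (Real.sqrt (2 * Mu) *
          (Real.sqrt (L2norm (fun x => ux x t)) * L2norm (fun x => ux x t - vx x t))
        + Real.sqrt (2 * Mw) *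
          (Real.sqrt (L2norm (fun x => ux x t - vx x t)) * L2norm (fun x => vx x t)))
      = Real.sqrt (2 * Mu) * (∫ t in Set.Ioc (0:ℝ) T,
          Real.sqrt (L2norm (fun x => ux x t)) * L2norm (fun x => ux x t - vx x t))
        + Real.sqrt (2 * Mw) * (∫ t in Set.Ioc (0:ℝ) T,
          Real.sqrt (L2norm (fun x => ux x t - vx x t)) * L2norm (fun x => vx x t)) := by
    rw [integral_add (hD1_int.const_mul _) (hD2_int.const_mul _),
      integral_const_mul, integral_const_mul]
  -- nonnegativity of the square integrals
  have hA0 : 0 ≤ ∫ t in Set.Ioc (0:ℝ) T, (L2norm (fun x => ux x t)) ^ 2 :=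
    integral_nonneg fun t => sq_nonneg _
  have hB0 : 0 ≤ ∫ t in Set.Ioc (0:ℝ) T, (L2norm (fun x => vx x t)) ^ 2 :=
    integral_nonneg fun t => sq_nonneg _
  have hC0 : 0 ≤ ∫ t in Set.Ioc (0:ℝ) T, (L2norm (fun x => ux x t - vx x t)) ^ 2 :=
    integral_nonneg fun t => sq_nonneg _
  -- final assembly
  simp only [BTnorm]
  rw [intervalIntegral.integral_of_le hT0, intervalIntegral.integral_of_le hT0,
    intervalIntegral.integral_of_le hT0, intervalIntegral.integral_of_le hT0,
    ← hMu_def, ← hMv_def, ← hMw_def]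
  calc ∫ t in Set.Ioc (0:ℝ) T, L2norm (fun x => u x t * ux x t - v x t * vx x t)
      ≤ _ := hFD
    _ = _ := hD_eq
    _ ≤ Real.sqrt 2 * T ^ ((1:ℝ)/4)
        * ((Mu + Real.sqrt (∫ t in Set.Ioc (0:ℝ) T, (L2norm (fun x => ux x t)) ^ 2))
          + (Mv + Real.sqrt (∫ t in Set.Ioc (0:ℝ) T, (L2norm (fun x => vx x t)) ^ 2)))
        * (Mw + Real.sqrt (∫ t in Set.Ioc (0:ℝ) T,
            (L2norm (fun x => ux x t - vx x t)) ^ 2)) :=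
        assemble hT0 hMu0 hMv0 hMw0 hA0 hB0 hC0 hi1 hi2
end
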